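/- Let φ = (1+√5)/2 and k ≥ 2. For the dominant root γ of x^k - 2x^{k-1} - ... - x - 1 and g_k(z) = (z-1)/((k+1)z² - 3kz + k - 1), there do not exist positive integers n, m, l and digits 1 ≤ a, b ≤ 9 with 81(2γ-2)g_k(γ)·γ^n·10^{-(m+l)}/(ab) = 1; equivalently, (2γ-2)g_k(γ) is never equal to (ab/81)·γ^{-n}·10^{m+l}. -/

import Mathlib

open Polynomial

noncomputable def Complex.abs : AbsoluteValue ℂ ℝ := NormedField.toAbsoluteValue ℂ

lemma Complex.abs_ofReal (r : ℝ) : Complex.abs r = |r| := by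
  change ‖(r:ℂ)‖ = |r|; simp

lemma Complex.abs_natCast (n : ℕ) : Complex.abs n = n := by
  change ‖(n:ℂ)‖ = n; simp

lemma Complex.abs_ofNat (n : ℕ) [n.AtLeastTwo] :
    Complex.abs (no_index (OfNat.ofNat n : ℂ)) = OfNat.ofNat n := by
  change ‖(OfNat.ofNat n : ℂ)‖ = OfNat.ofNat n; simp

noncomputable def φ : ℝ := (1 + Real.sqrt 5) / 2

def IsDomRoot (k : ℕ) (γ : ℝ) : Prop :=
  1 < γ ∧ γ ^ k = 2 * γ ^ (k - 1) + ∑ i ∈ Finset.range (k - 1), γ ^ i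

noncomputable def g (k : ℕ) (z : ℝ) : ℝ :=
  (z - 1) / (((k : ℝ) + 1) * z ^ 2 - 3 * (k : ℝ) * z + ((k : ℝ) - 1))

/-- every element of a multiset of reals bounded below by c ≥ 0 gives c^card ≤ prod -/
lemma aux_pow_card_le_prod (s : Multiset ℝ) (c : ℝ) (hc : 0 ≤ c) :
    (∀ x ∈ s, c ≤ x) → c ^ Multiset.card s ≤ s.prod := by
  induction s using Multiset.induction with
  | empty => simp
  | cons a t ih =>
    intro h
    have ha : c ≤ a := h a (Multiset.mem_cons_self a t)
    have ht : c ^ Multiset.card t ≤ t.prod := ih (fun x hx => h x (Multiset.mem_cons_of_mem hx))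
    have hcp : (0:ℝ) ≤ c ^ Multiset.card t := pow_nonneg hc _
    simp only [Multiset.prod_cons, Multiset.card_cons, pow_succ]
    calc c ^ Multiset.card t * c ≤ t.prod * a := by
          apply mul_le_mul ht ha hc (le_trans hcp ht)
      _ = a * t.prod := mul_comm _ _

/-- a nonempty multiset of complexes has an element of minimal absolute value -/
lemma aux_exists_min (s : Multiset ℂ) (hs : s ≠ 0) :
    ∃ θ ∈ s, ∀ x ∈ s, Complex.abs θ ≤ Complex.abs x := by
  have hl : s.toList ≠ [] := by
    simpa [← Multiset.coe_eq_zero, Multiset.coe_toList] using hs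
  obtain ⟨θ, hθ⟩ := Option.ne_none_iff_exists'.mp
    (fun h => hl (List.argmin_eq_none.mp h) : s.toList.argmin Complex.abs ≠ none)
  refine ⟨θ, ?_, ?_⟩
  · rw [← Multiset.mem_toList]; exact List.argmin_mem hθ
  · intro x hx
    exact List.le_of_mem_argmin (Multiset.mem_toList.mpr hx) hθ

noncomputable def Phz (j : ℕ) : ℤ[X] :=
  X ^ (j + 2) - C 2 * X ^ (j + 1) - ∑ i ∈ Finset.range (j + 1), X ^ i

lemma Phz_aeval {A : Type*} [CommRing A] [Algebra ℤ A] (j : ℕ) (x : A) :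
    aeval x (Phz j) = x ^ (j + 2) - 2 * x ^ (j + 1) - ∑ i ∈ Finset.range (j + 1), x ^ i := by
  simp [Phz, map_sub, map_sum, map_ofNat]

lemma Phz_deg_lt (j : ℕ) :
    (C (2:ℤ) * X ^ (j + 1) + ∑ i ∈ Finset.range (j + 1), (X:ℤ[X]) ^ i).degree
      < ((j + 2 : ℕ) : WithBot ℕ) := by
  apply lt_of_le_of_lt (degree_add_le _ _)
  apply max_lt
  · apply lt_of_le_of_lt (degree_C_mul_X_pow_le _ _)
    exact_mod_cast WithBot.coe_lt_coe.mpr (by omega : j + 1 < j + 2)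
  · apply lt_of_le_of_lt (degree_sum_le _ _)
    apply (Finset.sup_lt_iff (bot_lt_iff_ne_bot.mpr (by simp))).mpr
    intro i hi
    rw [degree_X_pow]
    exact_mod_cast WithBot.coe_lt_coe.mpr (by
      have := Finset.mem_range.mp hi; omega : i < j + 2)

lemma Phz_eq (j : ℕ) : Phz j
    = X ^ (j+2) - (C 2 * X ^ (j + 1) + ∑ i ∈ Finset.range (j + 1), X ^ i) := by
  rw [Phz]; ring

lemma Phz_monic (j : ℕ) : (Phz j).Monic := by
  rw [Phz_eq]
  exact monic_X_pow_sub (Phz_deg_lt j)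

lemma Phz_natDegree (j : ℕ) : (Phz j).natDegree = j + 2 := by
  have h := Phz_deg_lt j
  rw [Phz_eq]
  rw [← degree_X_pow (R := ℤ) (j+2)] at h
  rw [natDegree_eq_of_degree_eq (degree_sub_eq_left_of_degree_lt h), natDegree_X_pow]

lemma Phz_eval_zero (j : ℕ) : (Phz j).eval 0 = -1 := by
  have hsum : ∑ i ∈ Finset.range (j + 1), (0:ℤ) ^ i = 1 := by
    rw [Finset.sum_eq_single 0]
    · simp
    · intro i _ hi; exact zero_pow hi
    · intro h; simp at h
  simp [Phz, eval_finset_sum, hsum, zero_pow]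


lemma aux_final (j : ℕ) (t : ℝ) (ht0 : 0 ≤ t) (ht1 : t < 1) (htpos : 0 < t)
    (hspos : 0 < t ^ (j+1)) (hs241 : t ^ (j+1) * 2.41 ≤ 1)
    (hmain : 100 * (((j:ℝ) + 2) - 2 * t ^ (j+1)) ≤ 162 * (1 + t) ^ 2 * t * t ^ (j+1)) :
    False := by
  have h648 : 162 * (1 + t) ^ 2 * t ≤ 648 := by nlinarith
  rcases j with _ | _ | j2
  · -- k = 2
    norm_num at hmain hs241
    have ht41 : t ≤ 0.415 := by linarith
    have h1 : (1 + t) ^ 2 ≤ 2.0023 := by nlinarith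
    have h2 : t * t ≤ 0.1723 := by nlinarith
    nlinarith [hmain, mul_le_mul h1 h2 (mul_nonneg ht0 ht0) (by norm_num : (0:ℝ) ≤ 2.0023)]
  · -- k = 3
    norm_num at hmain hs241
    have hsq : t ^ 2 ≤ 0.41494 := by linarith
    have ht645 : t ≤ 0.645 := by nlinarith [sq_nonneg (t - 0.645)]
    have h1 : (1 + t) ^ 2 ≤ 2.706 := by nlinarith
    have h2 : t * t ^ 2 ≤ 0.268 := by
      nlinarith [mul_le_mul ht645 hsq (sq_nonneg t) (by norm_num : (0:ℝ) ≤ 0.645)]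
    nlinarith [hmain, mul_le_mul h1 h2 (by positivity) (by norm_num : (0:ℝ) ≤ 2.706)]
  · -- k ≥ 4
    have hj0 : (0:ℝ) ≤ (j2:ℝ) := Nat.cast_nonneg j2
    have hj4 : (4:ℝ) ≤ ((j2 + 1 + 1 : ℕ) : ℝ) + 2 := by push_cast; linarith
    have hbig := mul_le_mul_of_nonneg_right h648 hspos.le
    nlinarith [hmain, hs241, hspos, hj4, hbig]

set_option maxHeartbeats 2000000 in
theorem Lambda_one_ne_zero (k : ℕ) (hk : 2 ≤ k) (γ : ℝ) (hγ : IsDomRoot k γ) :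
    ¬∃ (n m l a b : ℕ), 1 ≤ n ∧ 1 ≤ m ∧ 1 ≤ l ∧ 1 ≤ a ∧ a ≤ 9 ∧ 1 ≤ b ∧ b ≤ 9 ∧
      (2 * γ - 2) * g k γ = ((a : ℝ) * (b : ℝ) / 81) * γ ^ (-(n : ℤ)) * 10 ^ (m + l) := by
  obtain ⟨hγ1, heq⟩ := hγ
  rintro ⟨n, m, l, a, b, hn, hm, hl, ha1, ha9, hb1, hb9, hE⟩
  obtain ⟨j, rfl⟩ : ∃ j, k = j + 2 := ⟨k - 2, by omega⟩
  have hk1 : j + 2 - 1 = j + 1 := by omega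
  rw [hk1] at heq
  have hγ0 : (0:ℝ) < γ := lt_trans one_pos hγ1
  -- γ > 2.41
  have hγ241 : 2.41 < γ := by
    have hpow : γ ^ j ≤ ∑ i ∈ Finset.range (j + 1), γ ^ i := by
      apply Finset.single_le_sum (f := fun i => γ ^ i)
      · intro i _; positivity
      · exact Finset.self_mem_range_succ j
    have h2 : γ ^ j * γ ^ 2 ≥ 2 * (γ ^ j * γ) + γ ^ j := by
      calc γ ^ j * γ ^ 2 = γ ^ (j + 2) := by ring
        _ = 2 * γ ^ (j+1) + ∑ i ∈ Finset.range (j + 1), γ ^ i := heq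
        _ ≥ 2 * (γ ^ j * γ) + γ ^ j := by rw [pow_succ]; linarith
    have hγj : (0:ℝ) < γ ^ j := by positivity
    have hq : γ ^ 2 ≥ 2 * γ + 1 := le_of_mul_le_mul_left (by nlinarith) hγj
    nlinarith
  -- the real equation, cleaned up
  have hγn : γ ^ n ≠ 0 := by positivity
  set Dγ : ℝ := ((j:ℝ) + 3) * γ ^ 2 - (3 * (j:ℝ) + 6) * γ + ((j:ℝ) + 1) with hDγdef
  have hgform : g (j+2) γ = (γ - 1) / Dγ := by
    rw [g, hDγdef]
    norm_num
    ring_nf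
  have hrpos : 0 < ((a : ℝ) * (b : ℝ) / 81) * γ ^ (-(n : ℤ)) * 10 ^ (m + l) := by
    have ha : (0:ℝ) < a := by exact_mod_cast ha1
    have hb : (0:ℝ) < b := by exact_mod_cast hb1
    positivity
  have hD0 : Dγ ≠ 0 := by
    intro h0
    rw [hgform, h0, div_zero, mul_zero] at hE
    exact absurd hE.symm (ne_of_gt hrpos)
  have hreal : 162 * (γ - 1) ^ 2 * γ ^ n = ((a:ℝ) * b * 10 ^ (m + l)) * Dγ := by
    rw [hgform] at hE
    rw [zpow_neg, zpow_natCast] at hE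
    field_simp at hE
    linarith [hE]
  -- integrality
  have haΦ : (aeval γ) (Phz j) = 0 := by
    rw [Phz_aeval]
    rw [heq]; ring
  have hint : IsIntegral ℤ γ := ⟨Phz j, Phz_monic j, haΦ⟩
  have hintQ : IsIntegral ℚ γ := hint.tower_top
  -- irrationality
  have hirr : γ ∉ (algebraMap ℚ ℝ).range := by
    rintro ⟨x, hx⟩
    have hxint : IsIntegral ℤ x := by
      rw [← isIntegral_algebraMap_iff (algebraMap ℚ ℝ).injective, hx]
      exact hint
    obtain ⟨r, hr⟩ := IsIntegrallyClosed.isIntegral_iff.mp hxint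
    have hγr : γ = (r : ℝ) := by
      rw [← hx, ← hr]; norm_num
    have hr2 : 2 ≤ r := by
      have : (1:ℝ) < (r:ℝ) := hγr ▸ hγ1
      exact_mod_cast this
    have hZ : r ^ (j+2) = 2 * r ^ (j+1) + ∑ i ∈ Finset.range (j + 1), r ^ i := by
      have := heq
      rw [hγr] at this
      exact_mod_cast this
    have hgeo : (∑ i ∈ Finset.range (j + 1), r ^ i) * (r - 1) = r ^ (j+1) - 1 :=
      geom_sum_mul r (j+1)
    have hQ2 : 2 ≤ r ^ (j+1) := le_trans hr2 (le_self_pow₀ (by omega) (by omega))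
    have hS : (∑ i ∈ Finset.range (j + 1), r ^ i) = r ^ (j+1) * r - 2 * r ^ (j+1) := by
      have hp : r ^ (j+2) = r ^ (j+1) * r := by rw [pow_succ]
      linarith [hZ, hp]
    have hcomb : r ^ (j+1) * ((r - 2) * (r - 1)) = r ^ (j+1) - 1 := by
      rw [hS] at hgeo; linarith [hgeo]
    rcases eq_or_lt_of_le hr2 with h2 | h3
    · rw [← h2] at hcomb; simp at hcomb; omega
    · have hprod : (2:ℤ) ≤ (r - 2) * (r - 1) := by nlinarith
      have := mul_le_mul_of_nonneg_left hprod (by linarith : (0:ℤ) ≤ r ^ (j+1))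
      linarith
  -- minpoly facts
  set μ : ℚ[X] := minpoly ℚ γ with hμdef
  have hμmonic : μ.Monic := minpoly.monic hintQ
  have hd2 : 2 ≤ μ.natDegree := (minpoly.two_le_natDegree_iff hintQ).mpr hirr
  have haΦQ : (aeval γ) ((Phz j).map (algebraMap ℤ ℚ)) = 0 := by
    rw [aeval_map_algebraMap]; exact haΦ
  have hΦQne : ((Phz j).map (algebraMap ℤ ℚ)) ≠ 0 :=
    ((Phz_monic j).map _).ne_zero
  have hdk : μ.natDegree ≤ j + 2 := by
    have h := natDegree_le_of_dvd (minpoly.dvd ℚ γ haΦQ) hΦQne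
    have h2 : ((Phz j).map (algebraMap ℤ ℚ)).natDegree = j + 2 := by
      rw [(Phz_monic j).natDegree_map, Phz_natDegree]
    rw [hμdef]
    omega
  -- constant term of minpoly over ℤ is ±1
  have hzdvd : minpoly ℤ γ ∣ Phz j := minpoly.isIntegrallyClosed_dvd hint haΦ
  have hevaldvd : (minpoly ℤ γ).eval 0 ∣ (-1 : ℤ) := by
    rw [← Phz_eval_zero j]; exact eval_dvd hzdvd
  have hc1 : (minpoly ℤ γ).eval 0 = 1 ∨ (minpoly ℤ γ).eval 0 = -1 := by
    have := isUnit_of_dvd_unit hevaldvd (IsUnit.neg isUnit_one)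
    exact Int.isUnit_iff.mp this
  have hμz : μ = (minpoly ℤ γ).map (algebraMap ℤ ℚ) :=
    minpoly.isIntegrallyClosed_eq_field_fractions' ℚ hint
  have hμ0 : μ.eval 0 = 1 ∨ μ.eval 0 = -1 := by
    rw [hμz, eval_map, eval₂_at_zero, coeff_zero_eq_eval_zero]
    rcases hc1 with h | h <;> rw [h] <;> norm_num
  -- complex roots of the minimal polynomial
  set μc : ℂ[X] := μ.map (algebraMap ℚ ℂ) with hμcdef
  have hμcmonic : μc.Monic := hμmonic.map _
  have hμcne : μc ≠ 0 := hμcmonic.ne_zero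
  have hsplit : Splits μc :=
    IsAlgClosed.splits μc
  have hcard : Multiset.card μc.roots = μ.natDegree := by
    rw [splits_iff_card_roots.mp hsplit, hμcdef, hμmonic.natDegree_map]
  have hγroot : ((γ:ℂ)) ∈ μc.roots := by
    rw [mem_roots hμcne]
    show μc.eval ((γ:ℂ)) = 0
    have hcoe : ((γ:ℂ)) = algebraMap ℝ ℂ γ := rfl
    rw [hμcdef, eval_map, ← aeval_def, hcoe, aeval_algebraMap_apply, hμdef,
      minpoly.aeval, map_zero]
  set R' : Multiset ℂ := μc.roots.erase (γ:ℂ) with hR'def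
  have hconsR : (γ:ℂ) ::ₘ R' = μc.roots := Multiset.cons_erase hγroot
  -- product of absolute values of all roots is 1
  have hprodone : ((μc.roots).map Complex.abs).prod = 1 := by
    have hfact : μc = (μc.roots.map (fun r => X - C r)).prod :=
      hsplit.eq_prod_roots_of_monic hμcmonic
    have he0 : Complex.abs (μc.eval 0) = 1 := by
      have hev : μc.eval 0 = algebraMap ℚ ℂ (μ.eval 0) := by
        rw [hμcdef, eval_map, eval₂_at_zero, coeff_zero_eq_eval_zero]
      rcases hμ0 with h | h <;> rw [hev, h] <;> simp
    rw [hfact, eval_multiset_prod, Multiset.map_map] at he0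
    rw [map_multiset_prod Complex.abs, Multiset.map_map] at he0
    simp only [Function.comp_def, eval_sub, eval_X, eval_C, zero_sub,
      AbsoluteValue.map_neg] at he0
    exact he0
  have hprodsplit : γ * ((R'.map Complex.abs).prod) = 1 := by
    rw [← hconsR, Multiset.map_cons, Multiset.prod_cons] at hprodone
    rwa [Complex.abs_ofReal, abs_of_pos hγ0] at hprodone
  have hcardR' : Multiset.card R' = μ.natDegree - 1 := by
    rw [hR'def, Multiset.card_erase_of_mem hγroot, hcard]
    rfl
  have hR'ne : R' ≠ 0 := by
    intro h0
    rw [h0] at hcardR'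
    simp at hcardR'
    omega
  obtain ⟨θ, hθmem, hθmin⟩ := aux_exists_min R' hR'ne
  set t := Complex.abs θ with htdef
  have ht0 : 0 ≤ t := Complex.abs.nonneg θ
  have hpowle : t ^ (μ.natDegree - 1) ≤ (R'.map Complex.abs).prod := by
    have h := aux_pow_card_le_prod (R'.map Complex.abs) t ht0 (by
      intro x hx
      obtain ⟨y, hy, rfl⟩ := Multiset.mem_map.mp hx
      exact hθmin y hy)
    rwa [Multiset.card_map, hcardR'] at h
  have htd : t ^ (μ.natDegree - 1) * γ ≤ 1 := by
    calc t ^ (μ.natDegree - 1) * γ ≤ (R'.map Complex.abs).prod * γ :=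
          mul_le_mul_of_nonneg_right hpowle hγ0.le
      _ = 1 := by rw [mul_comm]; exact hprodsplit
  have ht1 : t < 1 := by
    by_contra h
    push_neg at h
    have h1 : (1:ℝ) ≤ t ^ (μ.natDegree - 1) := one_le_pow₀ h
    have h2 : γ ≤ t ^ (μ.natDegree - 1) * γ := le_mul_of_one_le_left hγ0.le h1
    linarith
  have hsγ : t ^ (j + 1) * γ ≤ 1 := by
    have hle : t ^ (j + 1) ≤ t ^ (μ.natDegree - 1) :=
      pow_le_pow_of_le_one ht0 ht1.le (by omega)
    calc t ^ (j + 1) * γ ≤ t ^ (μ.natDegree - 1) * γ :=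
          mul_le_mul_of_nonneg_right hle hγ0.le
      _ ≤ 1 := htd
  -- θ is a conjugate of γ : every rational polynomial vanishing at γ vanishes at θ
  have hθμ : aeval θ μ = 0 := by
    have h1 : θ ∈ μc.roots := Multiset.mem_of_mem_erase (hR'def ▸ hθmem)
    have h2 := (mem_roots'.mp h1).2
    rw [IsRoot.def, hμcdef, eval_map, ← aeval_def] at h2
    exact h2
  have transfer : ∀ p : ℚ[X], aeval γ p = 0 → aeval θ p = 0 := by
    intro p hp
    obtain ⟨r, hr⟩ := minpoly.dvd ℚ γ hp
    rw [hμdef] at hθμ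
    rw [hr, map_mul, hθμ, zero_mul]
  -- the characteristic equation at θ
  have he1 : θ ^ (j+2) - 2 * θ ^ (j+1) - ∑ i ∈ Finset.range (j + 1), θ ^ i = 0 := by
    have h := transfer _ haΦQ
    rwa [aeval_map_algebraMap, Phz_aeval] at h
  have hψ : θ ^ (j+1) * (θ ^ 2 - 3 * θ + 1) = -1 := by
    have hgeo : (∑ i ∈ Finset.range (j+1), θ ^ i) * (θ - 1) = θ ^ (j+1) - 1 :=
      geom_sum_mul θ (j+1)
    linear_combination (θ - 1) * he1 + hgeo
  have hθ0 : θ ≠ 0 := by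
    intro h0
    rw [h0] at hψ
    simp [zero_pow] at hψ
  have htpos : 0 < t := Complex.abs.pos hθ0
  -- transfer the Λ = 0 equation to θ
  set P : ℚ[X] := C (162:ℚ) * (X - C 1) ^ 2 * X ^ n
      - C ((a:ℚ) * (b:ℚ) * 10 ^ (m + l)) *
        (C ((j:ℚ) + 3) * X ^ 2 - C (3 * (j:ℚ) + 6) * X + C ((j:ℚ) + 1)) with hPdef
  have haP : aeval γ P = 0 := by
    rw [hPdef]
    simp only [map_sub, map_add, map_mul, map_pow, aeval_X, aeval_C, eq_ratCast]
    push_cast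
    linear_combination hreal
  have he2 : 162 * (θ - 1) ^ 2 * θ ^ n
      = ((a:ℂ) * (b:ℂ) * 10 ^ (m + l)) *
        (((j:ℂ) + 3) * θ ^ 2 - (3 * (j:ℂ) + 6) * θ + ((j:ℂ) + 1)) := by
    have h := transfer P haP
    rw [hPdef] at h
    simp only [map_sub, map_add, map_mul, map_pow, aeval_X, aeval_C, eq_ratCast] at h
    push_cast at h
    linear_combination h
  -- absolute values
  set Nr : ℝ := (a:ℝ) * (b:ℝ) * 10 ^ (m + l) with hNrdef
  set A : ℝ := Complex.abs (((j:ℂ) + 3) * θ ^ 2 - (3 * (j:ℂ) + 6) * θ + ((j:ℂ) + 1))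
    with hAdef
  have hA0 : 0 ≤ A := Complex.abs.nonneg _
  have habs : 162 * (Complex.abs (θ - 1)) ^ 2 * t ^ n = Nr * A := by
    have h := congrArg Complex.abs he2
    rw [map_mul, map_mul, map_mul, map_pow, map_pow] at h
    simpa [Complex.abs_ofNat, Complex.abs_natCast] using h
  have hkey : (((j:ℂ) + 3) * θ ^ 2 - (3 * (j:ℂ) + 6) * θ + ((j:ℂ) + 1)) * θ ^ (j+1)
      = (θ ^ 2 - 1) * θ ^ (j+1) - ((j:ℂ) + 2) := by
    linear_combination ((j:ℂ) + 2) * hψ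
  have hAt : ((j:ℝ) + 2) - 2 * t ^ (j+1) ≤ A * t ^ (j+1) := by
    have h1 : A * t ^ (j+1) = Complex.abs ((θ ^ 2 - 1) * θ ^ (j+1) - ((j:ℂ) + 2)) := by
      rw [hAdef, htdef, ← map_pow, ← map_mul, hkey]
    have h2 : Complex.abs ((θ ^ 2 - 1) * θ ^ (j+1)) ≤ 2 * t ^ (j+1) := by
      rw [map_mul, map_pow]
      have h3 : Complex.abs (θ ^ 2 - 1) ≤ 2 := by
        calc Complex.abs (θ ^ 2 - 1) ≤ Complex.abs (θ ^ 2) + Complex.abs 1 :=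
              Complex.abs.sub_le_add _ _
          _ = t ^ 2 + 1 := by rw [map_pow, map_one]
          _ ≤ 2 := by nlinarith [ht1, ht0]
      have h4 : (0:ℝ) ≤ t ^ (j+1) := pow_nonneg ht0 _
      exact mul_le_mul_of_nonneg_right h3 h4
    have h5 : Complex.abs ((j:ℂ) + 2) = (j:ℝ) + 2 := by
      have : ((j:ℂ) + 2) = (((j + 2 : ℕ)):ℂ) := by push_cast; ring
      rw [this, Complex.abs_natCast]; push_cast; ring
    have h6 : Complex.abs ((j:ℂ) + 2) - Complex.abs ((θ ^ 2 - 1) * θ ^ (j+1))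
        ≤ Complex.abs ((θ ^ 2 - 1) * θ ^ (j+1) - ((j:ℂ) + 2)) := by
      rw [Complex.abs.map_sub]
      exact Complex.abs.le_sub _ _
    rw [h1]
    rw [h5] at h6
    linarith
  -- assemble the numeric inequalities
  have habs1 : Complex.abs (θ - 1) ≤ 1 + t := by
    calc Complex.abs (θ - 1) ≤ Complex.abs θ + Complex.abs 1 := Complex.abs.sub_le_add _ _
      _ = t + 1 := by rw [map_one]
      _ = 1 + t := by ring
  have htn : t ^ n ≤ t := by
    calc t ^ n ≤ t ^ 1 := pow_le_pow_of_le_one ht0 ht1.le hn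
      _ = t := pow_one t
  have hNr100 : (100:ℝ) ≤ Nr := by
    have h10 : (100:ℝ) ≤ 10 ^ (m + l) := by
      calc (100:ℝ) = 10 ^ 2 := by norm_num
        _ ≤ 10 ^ (m + l) := pow_le_pow_right₀ (by norm_num) (by omega)
    have ha : (1:ℝ) ≤ a := by exact_mod_cast ha1
    have hb : (1:ℝ) ≤ b := by exact_mod_cast hb1
    have hab : (1:ℝ) ≤ (a:ℝ) * b := one_le_mul_of_one_le_of_one_le ha hb
    have h100 : (0:ℝ) ≤ 10 ^ (m+l) := by positivity
    calc (100:ℝ) ≤ 10 ^ (m + l) := h10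
      _ = 1 * 10 ^ (m + l) := (one_mul _).symm
      _ ≤ (a:ℝ) * b * 10 ^ (m + l) := mul_le_mul_of_nonneg_right hab h100
  have hup : Nr * A ≤ 162 * (1 + t) ^ 2 * t := by
    rw [← habs]
    have h1 : (Complex.abs (θ - 1)) ^ 2 ≤ (1 + t) ^ 2 :=
      pow_le_pow_left₀ (Complex.abs.nonneg _) habs1 2
    nlinarith [htn, h1, ht0, htpos, sq_nonneg (Complex.abs (θ - 1))]
  have hspos : 0 < t ^ (j+1) := pow_pos htpos _
  have hs241 : t ^ (j+1) * 2.41 ≤ 1 := by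
    nlinarith [hsγ, hspos, hγ241]
  have hst : t ^ (j+1) ≤ t := by
    calc t ^ (j+1) ≤ t ^ 1 := pow_le_pow_of_le_one ht0 ht1.le (by omega)
      _ = t := pow_one t
  have hmain : 100 * (((j:ℝ) + 2) - 2 * t ^ (j+1)) ≤ 162 * (1 + t) ^ 2 * t * t ^ (j+1) := by
    have h2 : 100 * (A * t ^ (j+1)) ≤ Nr * (A * t ^ (j+1)) := by
      nlinarith [hA0, hNr100, hspos.le, mul_nonneg hA0 hspos.le]
    have h3 : Nr * A * t ^ (j+1) ≤ 162 * (1 + t) ^ 2 * t * t ^ (j+1) :=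
      mul_le_mul_of_nonneg_right hup hspos.le
    nlinarith [hAt, h2, h3, hspos]
  exact aux_final j t ht0 ht1 htpos hspos hs241 hmain
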